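/- Let V be a finite-dimensional module over A(α,β,γ) (q² a primitive l-th root of unity) on which z acts nilpotently and β ≠ 0. If v ∈ V satisfies vz = 0 and v ≠ 0, then the vectors v, vx, vx², …, vx^{l−1} are all nonzero. -/

import Mathlib

/-- Let `V` be a finite-dimensional right module over `A(α,β,γ)` (given by linear operators
`X, Y, Z` satisfying the right-action form of the defining relations
`xy = q²yx + α`, `xz = q⁻²zx + β`, `yz = q²zy + γ`), where `q²` is a primitive `l`-th root of
unity, `z` acts nilpotently and `β ≠ 0`. If `v ≠ 0` satisfies `v·z = 0`, then the vectors
`v, v·x, v·x², …, v·x^{l-1}` are all nonzero. -/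
theorem stmt13 {K : Type} [Field K] (q α β γ : K) (l : ℕ) (hl : 1 < l)
    (hq : IsPrimitiveRoot (q ^ 2) l) (hβ : β ≠ 0)
    (V : Type) [AddCommGroup V] [Module K V] [FiniteDimensional K V]
    (X Y Z : V →ₗ[K] V)
    (hxy : ∀ m : V, Y (X m) = q ^ 2 • X (Y m) + α • m)
    (hxz : ∀ m : V, Z (X m) = q⁻¹ ^ 2 • X (Z m) + β • m)
    (hyz : ∀ m : V, Z (Y m) = q ^ 2 • Y (Z m) + γ • m)
    (hZnil : ∃ n : ℕ, Z ^ n = 0)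
    (v : V) (hv : v ≠ 0) (hvz : Z v = 0) :
    ∀ k : ℕ, k ≤ l - 1 → (X ^ k) v ≠ 0 := by
  have hq2ne1 : (q : K) ^ 2 ≠ 1 := hq.ne_one hl
  have key : ∀ a : ℕ, Z ((X ^ (a + 1)) v)
      = (β * ∑ i ∈ Finset.range (a + 1), (q⁻¹ ^ 2) ^ i) • (X ^ a) v := by
    intro a
    induction a with
    | zero =>
      simp only [zero_add, pow_one, pow_zero, Finset.range_one,
        Finset.sum_singleton, mul_one]
      rw [hxz v, hvz]
      simp
    | succ n ih =>
      have h1 : (X ^ (n + 2)) v = X ((X ^ (n + 1)) v) := by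
        rw [pow_succ' X (n + 1)]; rfl
      have h2 : (X ^ (n + 1)) v = X ((X ^ n) v) := by
        rw [pow_succ' X n]; rfl
      rw [h1, hxz, ih, map_smul, ← h2, smul_smul, ← add_smul]
      congr 1
      simp only [geom_sum_succ]
      ring
  intro k hk
  induction k with
  | zero => simpa using hv
  | succ n ih =>
    have hn : n ≤ l - 1 := le_trans (Nat.le_succ n) hk
    have hXn : (X ^ n) v ≠ 0 := ih hn
    intro h0
    have hz0 : Z ((X ^ (n + 1)) v) = 0 := by rw [h0, map_zero]
    rw [key n] at hz0
    have hc : β * ∑ i ∈ Finset.range (n + 1), (q⁻¹ ^ 2) ^ i = 0 := by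
      by_contra hc
      exact hXn (by simpa [hc] using (smul_eq_zero.mp hz0).resolve_left hc)
    have hsum : ∑ i ∈ Finset.range (n + 1), (q⁻¹ ^ 2) ^ i = 0 :=
      (mul_eq_zero.mp hc).resolve_left hβ
    have hinv : (q⁻¹ ^ 2 : K) = (q ^ 2)⁻¹ := by rw [inv_pow]
    have hne : (q⁻¹ ^ 2 : K) ≠ 1 := by
      rw [hinv, ne_eq, inv_eq_one]; exact hq2ne1
    rw [geom_sum_eq hne] at hsum
    have hnum : (q⁻¹ ^ 2 : K) ^ (n + 1) = 1 := by
      rcases div_eq_zero_iff.mp hsum with h | h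
      · exact sub_eq_zero.mp h
      · exact absurd (sub_eq_zero.mp h) hne
    have hpow : (q ^ 2 : K) ^ (n + 1) = 1 := by
      rw [hinv, inv_pow, inv_eq_one] at hnum
      exact hnum
    have hlt : n + 1 < l := by omega
    exact (hq.pow_ne_one_of_pos_of_lt (Nat.succ_ne_zero n) hlt) hpow
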